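/- Let f be an unbounded modulus function. Then the following are equivalent: (1) the statistical ideal 𝔍_s equals the f-ideal 𝔍_f; (2) lim_{k → ∞} g_f(k) = 0, where g_f(k) := limsup_{n → ∞} f(n)/f(2^k n); (3) lim_{t → ∞} h_f(t) = 0, where h_f(t) := limsup_{n → ∞} f(n)/f(t·n) for real t ≥ 1. -/

import Mathlib

open Filter Set Topology

/-- `f : ℝ → ℝ` (viewed on `ℝ⁺`) is an unbounded modulus function. -/
def IsModulus (f : ℝ → ℝ) : Prop :=
  (∀ x : ℝ, 0 ≤ x → 0 ≤ f x) ∧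
  (∀ x : ℝ, 0 ≤ x → (f x = 0 ↔ x = 0)) ∧
  (∀ x y : ℝ, 0 ≤ x → 0 ≤ y → f (x + y) ≤ f x + f y) ∧
  (∀ x y : ℝ, 0 ≤ x → x ≤ y → f x ≤ f y) ∧
  ContinuousWithinAt f (Set.Ici 0) 0 ∧
  Tendsto (fun n : ℕ => f n) atTop atTop

/-- `α_A(n) = |A ∩ [1,n]|`. -/
noncomputable def alphaCount (A : Set ℕ) (n : ℕ) : ℕ := (A ∩ Set.Icc 1 n).ncard

/-- The statistical ideal: sets of natural density zero. -/
def statIdeal : Set (Set ℕ) :=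
  {A | Tendsto (fun n : ℕ => (alphaCount A n : ℝ) / n) atTop (nhds 0)}

/-- The `f`-ideal: sets of `f`-density zero. -/
def fIdeal (f : ℝ → ℝ) : Set (Set ℕ) :=
  {A | Tendsto (fun n : ℕ => f (alphaCount A n) / f n) atTop (nhds 0)}

/-- `g_f(k) = limsup_n f(n)/f(2^k n)`. -/
noncomputable def gmod (f : ℝ → ℝ) (k : ℕ) : ℝ :=
  Filter.limsup (fun n : ℕ => f n / f (2 ^ k * n)) atTop

/-- `h_f(t) = limsup_n f(n)/f(t n)` for real `t`. -/
noncomputable def hmod (f : ℝ → ℝ) (t : ℝ) : ℝ :=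
  Filter.limsup (fun n : ℕ => f n / f (t * n)) atTop

namespace ModAux

variable {f : ℝ → ℝ}

section basic

def H0 (f : ℝ → ℝ) : Prop := ∀ x : ℝ, 0 ≤ x → 0 ≤ f x
def HZ (f : ℝ → ℝ) : Prop := ∀ x : ℝ, 0 ≤ x → (f x = 0 ↔ x = 0)
def HSub (f : ℝ → ℝ) : Prop := ∀ x y : ℝ, 0 ≤ x → 0 ≤ y → f (x + y) ≤ f x + f y
def HMono (f : ℝ → ℝ) : Prop := ∀ x y : ℝ, 0 ≤ x → x ≤ y → f x ≤ f y


theorem fpos (h0 : H0 f) (hz : HZ f) (x : ℝ) (hx : 0 < x) : 0 < f x :=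
  lt_of_le_of_ne (h0 x hx.le) (fun h => hx.ne' ((hz x hx.le).1 h.symm))

theorem f_nat_mul (hz : HZ f) (hsub : HSub f) (m : ℕ) (x : ℝ) (hx : 0 ≤ x) : f (m * x) ≤ m * f x := by
  induction m with
  | zero => simp [le_of_eq ((hz 0 le_rfl).2 rfl)]
  | succ k ih =>
    have e : (((k:ℕ)+1:ℕ) : ℝ) * x = (k:ℝ) * x + x := by push_cast; ring
    calc f ((((k:ℕ)+1:ℕ):ℝ) * x) = f ((k:ℝ) * x + x) := by rw [e]
    _ ≤ f ((k:ℝ)*x) + f x := hsub _ _ (by positivity) hx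
    _ ≤ (k:ℝ) * f x + f x := by linarith [ih]
    _ = (((k:ℕ)+1:ℕ):ℝ) * f x := by push_cast; ring

theorem u_nonneg (h0 : H0 f) (t : ℝ) (ht : 0 ≤ t) (n : ℕ) : 0 ≤ f n / f (t * n) :=
  div_nonneg (h0 _ (Nat.cast_nonneg n)) (h0 _ (by positivity))

theorem u_le_one (h0 : H0 f) (hz : HZ f) (hmono : HMono f) (t : ℝ) (ht : 1 ≤ t) (n : ℕ) : f n / f (t * n) ≤ 1 := by
  rcases Nat.eq_zero_or_pos n with rfl | hn
  · simp [((hz 0 le_rfl).2 rfl)]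
  · have hn1 : (1:ℝ) ≤ n := by exact_mod_cast hn
    have hpos : 0 < f (t * n) := fpos h0 hz _ (by nlinarith)
    rw [div_le_one hpos]
    exact hmono _ _ (Nat.cast_nonneg n) (by nlinarith)

theorem u_bdd (h0 : H0 f) (hz : HZ f) (hmono : HMono f) (t : ℝ) (ht : 1 ≤ t) :
    IsBoundedUnder (· ≤ ·) atTop (fun n : ℕ => f n / f (t * n)) :=
  isBoundedUnder_of ⟨1, u_le_one h0 hz hmono t ht⟩

theorem u_cobdd (h0 : H0 f) (t : ℝ) (ht : 0 ≤ t) :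
    IsCoboundedUnder (· ≤ ·) atTop (fun n : ℕ => f n / f (t * n)) :=
  isCoboundedUnder_le_of_le atTop (x := 0) (u_nonneg h0 t ht)

theorem hmod_nonneg (h0 : H0 f) (hz : HZ f) (hmono : HMono f) (t : ℝ) (ht : 1 ≤ t) : 0 ≤ hmod f t :=
  le_limsup_of_frequently_le
    (Frequently.of_forall (u_nonneg h0 t (by linarith)))
    (u_bdd h0 hz hmono t ht)

theorem hmod_anti (h0 : H0 f) (hz : HZ f) (hmono : HMono f) {s t : ℝ} (hs : 1 ≤ s) (hst : s ≤ t) : hmod f t ≤ hmod f s := by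
  refine limsup_le_limsup (Eventually.of_forall fun n => ?_)
    (u_cobdd h0 t (by linarith)) (u_bdd h0 hz hmono s hs)
  rcases Nat.eq_zero_or_pos n with rfl | hn
  · simp
  · have hn1 : (1:ℝ) ≤ n := by exact_mod_cast hn
    exact div_le_div_of_nonneg_left (h0 _ (Nat.cast_nonneg n))
      (fpos h0 hz _ (by nlinarith)) (hmono _ _ (by nlinarith) (by nlinarith))

theorem gmod_eq (k : ℕ) : gmod f k = hmod f (2 ^ k) := rfl

theorem alpha_fin (A : Set ℕ) (n : ℕ) : (A ∩ Set.Icc 1 n).Finite :=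
  (Set.finite_Icc 1 n).inter_of_right A

theorem alpha_le (A : Set ℕ) (n : ℕ) : alphaCount A n ≤ n := by
  have h := Set.ncard_le_ncard (Set.inter_subset_right (s := A) (t := Set.Icc 1 n))
    (Set.finite_Icc 1 n)
  calc alphaCount A n ≤ (Set.Icc 1 n).ncard := h
  _ = n := by rw [← Finset.coe_Icc, Set.ncard_coe_finset, Nat.card_Icc]; omega

/-- The `f`-ideal is always contained in the statistical ideal. -/
theorem fIdeal_subset (h0 : H0 f) (hz : HZ f) (hsub : HSub f) (hmono : HMono f) :
    fIdeal f ⊆ statIdeal := by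
  intro A hA
  simp only [fIdeal, statIdeal, Set.mem_setOf_eq] at hA ⊢
  rw [Metric.tendsto_atTop] at hA ⊢
  intro ε hε
  set m : ℕ := ⌈1/ε⌉₊ with hm
  have hm1 : 1/ε ≤ (m:ℝ) := Nat.le_ceil _
  have hmpos : 0 < (m:ℝ) := lt_of_lt_of_le (by positivity) hm1
  obtain ⟨N, hN⟩ := hA (1/m) (by positivity)
  refine ⟨max N 1, fun n hn => ?_⟩
  have hn1 : 1 ≤ n := le_trans (le_max_right N 1) hn
  have hnR : (1:ℝ) ≤ n := by exact_mod_cast hn1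
  set a : ℕ := alphaCount A n with ha
  rw [Real.dist_eq, sub_zero, abs_of_nonneg (by positivity)]
  by_contra hcon
  push_neg at hcon
  have hεn : ε * n ≤ (a:ℝ) := by
    rw [le_div_iff₀ (by linarith)] at hcon; linarith
  have h1 : (n:ℝ) ≤ (m:ℝ) * a := by
    have e1 : (n:ℝ) = (1/ε) * (ε * n) := by field_simp
    have e2 : (1/ε) * (ε * n) ≤ (1/ε) * a := by
      apply mul_le_mul_of_nonneg_left hεn (by positivity)
    have e3 : (1/ε) * (a:ℝ) ≤ (m:ℝ) * a := by
      apply mul_le_mul_of_nonneg_right hm1 (Nat.cast_nonneg a)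
    linarith
  have h2 : f n ≤ f ((m:ℝ) * a) := hmono _ _ (Nat.cast_nonneg n) h1
  have h3 : f ((m:ℝ) * a) ≤ (m:ℝ) * f a := f_nat_mul hz hsub m _ (Nat.cast_nonneg a)
  have hfn : 0 < f n := fpos h0 hz _ (by linarith)
  have hkey : 1/(m:ℝ) ≤ f a / f n := by
    rw [div_le_div_iff₀ hmpos hfn]
    nlinarith
  have := hN n (le_trans (le_max_left N 1) hn)
  rw [Real.dist_eq, sub_zero] at this
  have : f a / f n < 1/(m:ℝ) := lt_of_le_of_lt (le_abs_self _) this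
  linarith

/-- If `hmod f t → 0`, the statistical ideal is contained in the `f`-ideal. -/
theorem statIdeal_subset (h0 : H0 f) (hz : HZ f) (hmono : HMono f)
    (htop : Tendsto (fun n : ℕ => f n) atTop atTop)
    (h3 : Tendsto (fun t : ℝ => hmod f t) atTop (nhds 0)) :
    statIdeal ⊆ fIdeal f := by
  intro A hA
  simp only [fIdeal, statIdeal, Set.mem_setOf_eq] at hA ⊢
  rw [Metric.tendsto_nhds] at hA ⊢
  intro ε hε
  -- choose t ≥ 1 with hmod f t < ε
  obtain ⟨T, hT⟩ := eventually_atTop.1 (Metric.tendsto_nhds.1 h3 ε hε)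
  set t : ℝ := max T 1 with htdef
  have ht1 : (1:ℝ) ≤ t := le_max_right T 1
  have hmodt : hmod f t < ε := by
    have := hT t (le_max_left T 1)
    rw [Real.dist_eq, sub_zero] at this
    exact lt_of_le_of_lt (le_abs_self _) this
  have hev : ∀ᶠ n : ℕ in atTop, f n / f (t * n) < ε :=
    eventually_lt_of_limsup_lt hmodt (u_bdd h0 hz hmono t ht1)
  obtain ⟨M0, hM0⟩ := eventually_atTop.1 hev
  set M : ℕ := max M0 1 with hMdef
  have hM1 : 1 ≤ M := le_max_right M0 1
  -- events
  have hev1 : ∀ᶠ n : ℕ in atTop, (alphaCount A n : ℝ) / n < 1/(t+1) := by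
    filter_upwards [hA (1/(t+1)) (by positivity)] with n hn
    rw [Real.dist_eq, sub_zero] at hn
    exact lt_of_le_of_lt (le_abs_self _) hn
  have hev2 : ∀ᶠ n : ℕ in atTop, f M / ε < f n := htop.eventually_gt_atTop _
  filter_upwards [hev1, hev2, eventually_ge_atTop 1] with n h1 h2 hn1
  set a : ℕ := alphaCount A n with ha
  have hnR : (1:ℝ) ≤ n := by exact_mod_cast hn1
  have hfn : 0 < f n := fpos h0 hz _ (by linarith)
  have hfa : 0 ≤ f a := h0 _ (Nat.cast_nonneg a)
  rw [Real.dist_eq, sub_zero, abs_of_nonneg (div_nonneg hfa hfn.le)]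
  have htan : t * a < n := by
    rw [div_lt_div_iff₀ (by linarith) (by positivity)] at h1
    have : (0:ℝ) ≤ a := Nat.cast_nonneg a
    nlinarith
  rcases le_or_gt M a with hMa | hMa
  · -- a large: use the limsup bound
    have haR : (1:ℝ) ≤ a := by exact_mod_cast le_trans hM1 hMa
    have hfta : 0 < f (t * a) := fpos h0 hz _ (by nlinarith)
    have step1 : f a / f n ≤ f a / f (t * a) :=
      div_le_div_of_nonneg_left hfa hfta (hmono _ _ (by nlinarith) htan.le)
    have step2 : f a / f (t * a) < ε := hM0 a (le_trans (le_max_left M0 1) hMa)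
    linarith
  · -- a small: use unboundedness of f
    have hfaM : f a ≤ f M := hmono _ _ (Nat.cast_nonneg a) (by exact_mod_cast hMa.le)
    have : f a / f n ≤ f M / f n := by gcongr
    have hMε : f M / f n < ε := by
      rw [div_lt_iff₀ hfn]
      calc f M = ε * (f M / ε) := by field_simp
      _ < ε * f n := mul_lt_mul_of_pos_left h2 hε
    linarith


/-- If the ideals agree then `gmod f → 0`. -/
theorem construction (h0 : H0 f) (hz : HZ f) (hsub : HSub f) (hmono : HMono f)
    (htop : Tendsto (fun n : ℕ => f n) atTop atTop)
    (h1 : statIdeal = fIdeal f) :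
    Tendsto (fun k : ℕ => gmod f k) atTop (nhds 0) := by
  have gnn : ∀ k, 0 ≤ gmod f k := fun k => by
    rw [ModAux.gmod_eq]
    exact hmod_nonneg h0 hz hmono _ (one_le_pow₀ one_le_two)
  have gant : Antitone (gmod f) := antitone_nat_of_succ_le fun k => by
    rw [ModAux.gmod_eq, ModAux.gmod_eq]
    exact hmod_anti h0 hz hmono (one_le_pow₀ one_le_two)
      (pow_le_pow_right₀ one_le_two (Nat.le_succ k))
  have gbdd : BddBelow (Set.range (gmod f)) := ⟨0, by rintro x ⟨k, rfl⟩; exact gnn k⟩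
  have hlim : Tendsto (gmod f) atTop (𝓝 (⨅ k, gmod f k)) := tendsto_atTop_ciInf gant gbdd
  set δ := ⨅ k, gmod f k with hδdef
  have hδ0 : 0 ≤ δ := le_ciInf gnn
  rcases hδ0.eq_or_lt with h | hδpos
  · rwa [← h] at hlim
  exfalso
  have hδle : ∀ k, δ ≤ gmod f k := fun k => ciInf_le gbdd k
  have key : ∀ k m : ℕ, ∃ n : ℕ, m ≤ n ∧ δ/2 < f n / f (2^k * n) := by
    intro k m
    have hfreq : ∃ᶠ n : ℕ in atTop, δ/2 < f n / f ((2:ℝ)^k * n) :=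
      frequently_lt_of_lt_limsup (u_cobdd h0 _ (by positivity))
        (lt_of_lt_of_le (by linarith) (hδle k))
    obtain ⟨n, hn, h⟩ := (frequently_atTop.1 hfreq) m
    exact ⟨n, hn, h⟩
  obtain ⟨nn, hnn0, hnnS⟩ : ∃ nn : ℕ → ℕ, nn 0 = 1 ∧
      ∀ k, nn (k+1) = (key (k+1) (2 * nn k + 1)).choose :=
    ⟨fun k => Nat.rec 1 (fun k prev => (key (k+1) (2 * prev + 1)).choose) k,
      rfl, fun k => rfl⟩
  have hge : ∀ k, 2 * nn k + 1 ≤ nn (k+1) := fun k => by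
    rw [hnnS]; exact (key (k+1) (2 * nn k + 1)).choose_spec.1
  have hval : ∀ k, δ/2 < f (nn (k+1)) / f ((2:ℝ)^(k+1) * nn (k+1)) := fun k => by
    rw [hnnS]; exact (key (k+1) (2 * nn k + 1)).choose_spec.2
  have nn1 : ∀ k, 1 ≤ nn k := fun k => by
    cases k with
    | zero => omega
    | succ k => have := hge k; omega
  set NN : ℕ → ℕ := fun k => 2^k * nn k with hNNdef
  have h2pow : ∀ k : ℕ, 1 ≤ 2^k := fun k => Nat.one_le_two_pow
  have NNpos : ∀ k, 1 ≤ NN k := fun k => by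
    simp only [hNNdef]
    exact Nat.one_le_iff_ne_zero.2 (Nat.mul_ne_zero (by positivity) (by have := nn1 k; omega))
  have nnNN : ∀ k, nn k ≤ NN k := fun k => by
    simp only [hNNdef]
    calc nn k = 1 * nn k := (one_mul _).symm
    _ ≤ 2^k * nn k := Nat.mul_le_mul_right _ (h2pow k)
  set lo : ℕ → ℕ := fun k => NN k - nn k with hlodef
  have hNNlo : ∀ k, NN k + nn (k+1) ≤ NN (k+1) := fun k => by
    simp only [hNNdef]
    have h1 : 1 ≤ 2^k := h2pow k
    have h2 : nn k ≤ nn (k+1) := by have := hge k; omega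
    have e1 : 2^k * nn k ≤ 2^k * nn (k+1) := Nat.mul_le_mul_left _ h2
    have e2 : nn (k+1) ≤ 2^k * nn (k+1) := by
      calc nn (k+1) = 1 * nn (k+1) := (one_mul _).symm
      _ ≤ 2^k * nn (k+1) := Nat.mul_le_mul_right _ h1
    have e3 : 2^(k+1) * nn (k+1) = 2^k * nn (k+1) + 2^k * nn (k+1) := by
      rw [pow_succ]; ring
    omega
  have NNlo : ∀ k, NN k ≤ lo (k+1) := fun k => by
    have h := hNNlo k
    have h2 := nnNN (k+1)
    simp only [hlodef]
    omega
  have lomono : Monotone lo := monotone_nat_of_le_succ fun k =>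
    le_trans (by simp only [hlodef]; omega) (NNlo k)
  have NNmono : Monotone NN := monotone_nat_of_le_succ fun k => by
    have := hNNlo k; omega
  have NNstrict : StrictMono NN := strictMono_nat_of_lt_succ fun k => by
    have := hNNlo k; have := nn1 (k+1); omega
  have hs : ∀ k, (∑ j ∈ Finset.range (k+1), nn j) ≤ 2 * nn k := by
    intro k
    induction k with
    | zero => rw [Finset.sum_range_one]; omega
    | succ k ih =>
      rw [Finset.sum_range_succ]
      have := hge k; omega
  set A : Set ℕ := ⋃ k, Set.Ioc (lo k) (NN k) with hAdef
  -- counting upper bound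
  have hub : ∀ k N, N ≤ lo (k+1) → alphaCount A N ≤ 2 * nn k := by
    intro k N hN
    have hsubset : A ∩ Set.Icc 1 N ⊆
        ↑((Finset.range (k+1)).biUnion (fun j => Finset.Ioc (lo j) (NN j))) := by
      rintro m ⟨hmA, hmI⟩
      rw [Set.mem_Icc] at hmI
      simp only [hAdef, Set.mem_iUnion, Set.mem_Ioc] at hmA
      obtain ⟨j, hj1, hj2⟩ := hmA
      have hjk : j < k + 1 := by
        by_contra hc
        push_neg at hc
        have := lomono hc
        omega
      simp only [Finset.coe_biUnion, Set.mem_iUnion, Finset.mem_coe, Finset.mem_Ioc,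
        Finset.mem_range]
      exact ⟨j, hjk, hj1, hj2⟩
    calc alphaCount A N
        ≤ (↑((Finset.range (k+1)).biUnion (fun j => Finset.Ioc (lo j) (NN j))) : Set ℕ).ncard :=
          Set.ncard_le_ncard hsubset (Finset.finite_toSet _)
    _ = ((Finset.range (k+1)).biUnion (fun j => Finset.Ioc (lo j) (NN j))).card :=
          Set.ncard_coe_finset _
    _ ≤ ∑ j ∈ Finset.range (k+1), (Finset.Ioc (lo j) (NN j)).card := Finset.card_biUnion_le
    _ = ∑ j ∈ Finset.range (k+1), nn j := Finset.sum_congr rfl (fun j _ => by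
          rw [Nat.card_Ioc]
          have := nnNN j
          simp only [hlodef]
          omega)
    _ ≤ 2 * nn k := hs k
  -- counting lower bound
  have hlb : ∀ k, nn k ≤ alphaCount A (NN k) := by
    intro k
    have hsubset : Set.Ioc (lo k) (NN k) ⊆ A ∩ Set.Icc 1 (NN k) := by
      intro m hm
      rw [Set.mem_Ioc] at hm
      exact ⟨Set.mem_iUnion.2 ⟨k, Set.mem_Ioc.2 hm⟩, Set.mem_Icc.2 ⟨by omega, hm.2⟩⟩
    calc nn k = (Set.Ioc (lo k) (NN k)).ncard := by
          rw [← Finset.coe_Ioc, Set.ncard_coe_finset, Nat.card_Ioc]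
          have := nnNN k
          simp only [hlodef]
          omega
    _ ≤ alphaCount A (NN k) := Set.ncard_le_ncard hsubset (alpha_fin A (NN k))
  -- the main density bound
  have main : ∀ j N, NN j < N → N ≤ NN (j+1) → (alphaCount A N : ℝ)/N ≤ 2/2^j := by
    intro j N hNlt hNle
    have hNpos : (0:ℝ) < N := by
      have : 1 ≤ N := by have := NNpos j; omega
      exact_mod_cast Nat.lt_of_lt_of_le Nat.zero_lt_one this
    rcases le_or_gt N (lo (j+1)) with hcase | hcase
    · have hα : alphaCount A N ≤ 2 * nn j := hub j N hcase
      have hden : ((2:ℝ)^j * nn j) ≤ N := by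
        have : NN j ≤ N := hNlt.le
        have e : (NN j : ℝ) = (2:ℝ)^j * nn j := by simp only [hNNdef]; push_cast; ring
        rw [← e]
        exact_mod_cast this
      have hdenpos : (0:ℝ) < (2:ℝ)^j * nn j := by
        have := nn1 j
        have : (1:ℝ) ≤ nn j := by exact_mod_cast this
        positivity
      calc (alphaCount A N : ℝ)/N ≤ (2 * nn j : ℝ)/((2:ℝ)^j * nn j) := by
            apply div_le_div₀ (by positivity) ?_ hdenpos hden
            exact_mod_cast hα
      _ = 2/2^j := by
          have hnnj : (nn j : ℝ) ≠ 0 := by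
            have := nn1 j
            exact_mod_cast Nat.one_le_iff_ne_zero.1 this
          field_simp
    · have hNle2 : N ≤ lo (j+2) := le_trans hNle (NNlo (j+1))
      have hα : alphaCount A N ≤ 2 * nn (j+1) := hub (j+1) N hNle2
      have hden : ((2:ℝ)^j * nn (j+1)) ≤ N := by
        have hnat : 2^j * nn (j+1) ≤ lo (j+1) := by
          have e3 : 2^(j+1) * nn (j+1) = 2^j * nn (j+1) + 2^j * nn (j+1) := by
            rw [pow_succ]; ring
          have e4 : nn (j+1) ≤ 2^j * nn (j+1) := by
            calc nn (j+1) = 1 * nn (j+1) := (one_mul _).symm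
            _ ≤ 2^j * nn (j+1) := Nat.mul_le_mul_right _ (h2pow j)
          simp only [hlodef, hNNdef]
          omega
        have h5 : 2^j * nn (j+1) ≤ N := by omega
        exact_mod_cast h5
      have hdenpos : (0:ℝ) < (2:ℝ)^j * nn (j+1) := by
        have h1 : (1:ℝ) ≤ nn (j+1) := by exact_mod_cast nn1 (j+1)
        positivity
      calc (alphaCount A N : ℝ)/N ≤ (2 * nn (j+1) : ℝ)/((2:ℝ)^j * nn (j+1)) := by
            apply div_le_div₀ (by positivity) ?_ hdenpos hden
            exact_mod_cast hα
      _ = 2/2^j := by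
          have hnnj : (nn (j+1) : ℝ) ≠ 0 := by
            have := nn1 (j+1)
            exact_mod_cast Nat.one_le_iff_ne_zero.1 this
          field_simp
  -- A has natural density zero
  have hdens : A ∈ statIdeal := by
    simp only [statIdeal, Set.mem_setOf_eq]
    rw [Metric.tendsto_atTop]
    intro ε hε
    obtain ⟨k, hk⟩ : ∃ k : ℕ, 2/(2^k : ℝ) < ε := by
      obtain ⟨k, hk⟩ :=
        ((tendsto_pow_atTop_atTop_of_one_lt (one_lt_two (α := ℝ))).eventually_gt_atTop
          (2/ε)).exists
      refine ⟨k, ?_⟩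
      rw [div_lt_iff₀ (by positivity)]
      rw [div_lt_iff₀ hε] at hk
      linarith [mul_comm ε ((2:ℝ)^k)]
    refine ⟨NN k + 1, fun N hN => ?_⟩
    have hexists : ∃ j, N ≤ NN j := by
      refine ⟨N, le_trans (Nat.lt_two_pow_self (n := N)).le ?_⟩
      simp only [hNNdef]
      calc 2^N = 2^N * 1 := (mul_one _).symm
      _ ≤ 2^N * nn N := Nat.mul_le_mul_left _ (nn1 N)
    have hj0 : N ≤ NN (Nat.find hexists) := Nat.find_spec hexists
    have hj0k : k < Nat.find hexists := by
      by_contra hc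
      push_neg at hc
      have := NNmono hc
      omega
    set j := Nat.find hexists - 1 with hjdef
    have hje : j + 1 = Nat.find hexists := by omega
    have hlt : NN j < N := by
      have hmin := Nat.find_min hexists (m := j) (by omega)
      omega
    have hjk : k ≤ j := by omega
    have hbound := main j N hlt (by rw [hje]; exact hj0)
    have hmon2 : (2:ℝ)/2^j ≤ 2/2^k := by
      apply div_le_div_of_nonneg_left (by norm_num) (by positivity)
      exact pow_le_pow_right₀ one_le_two hjk
    rw [Real.dist_eq, sub_zero, abs_of_nonneg (by positivity)]
    calc (alphaCount A N : ℝ)/N ≤ 2/2^j := hbound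
    _ ≤ 2/2^k := hmon2
    _ < ε := hk
  -- but A is not in the f-ideal
  have hAf : A ∈ fIdeal f := h1 ▸ hdens
  simp only [fIdeal, Set.mem_setOf_eq] at hAf
  have hcomp : Tendsto (fun j : ℕ => f (alphaCount A (NN (j+1))) / f (NN (j+1))) atTop (𝓝 0) :=
    hAf.comp ((NNstrict.tendsto_atTop).comp (tendsto_add_atTop_nat 1))
  obtain ⟨j, hj⟩ := (Metric.tendsto_nhds.1 hcomp (δ/2) (by linarith)).exists
  rw [Real.dist_eq, sub_zero] at hj
  have hj' : f (alphaCount A (NN (j+1))) / f (NN (j+1)) < δ/2 :=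
    lt_of_le_of_lt (le_abs_self _) hj
  have hcast : ((NN (j+1) : ℕ) : ℝ) = (2:ℝ)^(j+1) * (nn (j+1) : ℝ) := by
    simp only [hNNdef]; push_cast; ring
  have hfNN : 0 < f (NN (j+1)) := by
    apply fpos h0 hz
    have := NNpos (j+1)
    have : (1:ℝ) ≤ (NN (j+1) : ℝ) := by exact_mod_cast this
    linarith
  have hnum : f (nn (j+1)) ≤ f (alphaCount A (NN (j+1))) := by
    apply hmono _ _ (Nat.cast_nonneg _)
    exact_mod_cast hlb (j+1)
  have hfinal : δ/2 < f (alphaCount A (NN (j+1))) / f (NN (j+1)) := by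
    calc δ/2 < f (nn (j+1)) / f ((2:ℝ)^(j+1) * nn (j+1)) := hval j
    _ = f (nn (j+1)) / f (NN (j+1)) := by rw [← hcast]
    _ ≤ f (alphaCount A (NN (j+1))) / f (NN (j+1)) := by gcongr
  linarith

end basic
end ModAux

theorem statIdeal_eq_fIdeal_tfae (f : ℝ → ℝ) (hf : IsModulus f) :
    List.TFAE [statIdeal = fIdeal f,
      Tendsto (fun k : ℕ => gmod f k) atTop (nhds 0),
      Tendsto (fun t : ℝ => hmod f t) atTop (nhds 0)] := by
  obtain ⟨h0, hz, hsub, hmono, -, htop⟩ := hf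
  tfae_have 2 → 3 := by
    intro h2
    rw [Metric.tendsto_nhds] at h2 ⊢
    intro ε hε
    obtain ⟨k, hk⟩ := (h2 ε hε).exists
    rw [Real.dist_eq, sub_zero] at hk
    have hgk : gmod f k < ε := lt_of_le_of_lt (le_abs_self _) hk
    have h2k : (1:ℝ) ≤ 2 ^ k := one_le_pow₀ one_le_two
    filter_upwards [eventually_ge_atTop ((2:ℝ)^k)] with t ht
    rw [Real.dist_eq, sub_zero, abs_of_nonneg (ModAux.hmod_nonneg h0 hz hmono t (le_trans h2k ht))]
    calc hmod f t ≤ hmod f (2^k) := ModAux.hmod_anti h0 hz hmono h2k ht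
    _ = gmod f k := (ModAux.gmod_eq k).symm
    _ < ε := hgk
  tfae_have 3 → 2 := by
    intro h3
    have : Tendsto (fun k : ℕ => (2:ℝ) ^ k) atTop atTop :=
      tendsto_pow_atTop_atTop_of_one_lt one_lt_two
    exact h3.comp this
  tfae_have 3 → 1 := fun h3 => subset_antisymm
    (ModAux.statIdeal_subset h0 hz hmono htop h3)
    (ModAux.fIdeal_subset h0 hz hsub hmono)
  tfae_have 1 → 2 := fun h1 => ModAux.construction h0 hz hsub hmono htop h1
  tfae_finish
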